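/- Let Λ be a ring, G = H ⋊ Γ with Γ infinite cyclic generated by γ, and let f := t^n + Σ_{i=0}^{n-1} λ_i t^i ∈ Λ[G] be a monic polynomial in t := γ − 1 of degree n with coefficients λ_i ∈ Jac(Λ[H]). Then M := Λ[G]/Λ[G]f is finitely generated and free as a Λ[H]-module, with basis given by the residue classes of 1, t, …, t^{n-1}. -/

import Mathlib

open Finsupp MonoidAlgebra Multiplicative SemidirectProduct Finset

namespace QFOSAux

theorem isUnit_one_add_of_mem_jacobson_bot {R : Type*} [Ring R] {x : R}
    (hx : x ∈ (⊥ : Ideal R).jacobson) : IsUnit (1 + x) := by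
  have key : ∀ y ∈ (⊥ : Ideal R).jacobson, ∃ z : R, z * (1 + y) = 1 := by
    intro y hy
    obtain ⟨z, hz⟩ := Ideal.mem_jacobson_iff.mp hy 1
    rw [Ideal.mem_bot, mul_one, sub_eq_zero] at hz
    exact ⟨z, by rw [mul_add, mul_one, add_comm]; exact hz⟩
  obtain ⟨z, hz⟩ := key x hx
  have hzx : -(z * x) ∈ (⊥ : Ideal R).jacobson :=
    neg_mem (Ideal.mul_mem_left _ z hx)
  obtain ⟨w, hw⟩ := key _ hzx
  have hz' : (1 : R) + -(z * x) = z := by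
    have h2 : z * (1 + x) = z + z * x := by rw [mul_add, mul_one]
    rw [h2] at hz
    rw [← hz, add_neg_cancel_right]
  rw [hz'] at hw
  have hwx : w = 1 + x := by
    calc w = w * (z * (1 + x)) := by rw [hz, mul_one]
    _ = w * z * (1 + x) := by rw [mul_assoc]
    _ = 1 + x := by rw [hw, one_mul]
  exact ⟨⟨1 + x, z, by rw [← hwx, hw], hz⟩, rfl⟩

section Coeff

variable {Λ : Type*} [Ring Λ] {H : Type*} [Group H] (φ : Multiplicative ℤ →* MulAut H)

/-- extract the `γ^z`-coefficient, an element of `Λ[H]`. -/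
noncomputable def coeff (z : ℤ) :
    MonoidAlgebra Λ (H ⋊[φ] Multiplicative ℤ) →+ MonoidAlgebra Λ H :=
  MonoidAlgebra.coeffAddEquiv.symm.toAddMonoidHom.comp
    ((Finsupp.comapDomain.addMonoidHom
    (f := fun h => (⟨h, ofAdd z⟩ : H ⋊[φ] Multiplicative ℤ))
    (fun _ _ hab => congrArg SemidirectProduct.left hab)).comp
      MonoidAlgebra.coeffAddEquiv.toAddMonoidHom)

theorem coeff_apply (z : ℤ) (a : MonoidAlgebra Λ (H ⋊[φ] Multiplicative ℤ)) (h : H) :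
    (coeff φ z a).coeff h = a.coeff ⟨h, ofAdd z⟩ := rfl

theorem coeff_single (z : ℤ) (g : H ⋊[φ] Multiplicative ℤ) (c : Λ) :
    coeff φ z (MonoidAlgebra.single g c) =
      if g.right = ofAdd z then MonoidAlgebra.single g.left c else 0 := by
  classical
  ext h
  rw [coeff_apply]
  rw [show (MonoidAlgebra.single g c : MonoidAlgebra Λ (H ⋊[φ] Multiplicative ℤ)).coeff
      ⟨h, ofAdd z⟩ = (Finsupp.single g c : _ →₀ Λ) ⟨h, ofAdd z⟩ from rfl]
  rw [Finsupp.single_apply]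
  by_cases hg : g.right = ofAdd z
  · rw [if_pos hg]
    rw [show (MonoidAlgebra.single g.left c : MonoidAlgebra Λ H).coeff h
        = (Finsupp.single g.left c : _ →₀ Λ) h from rfl, Finsupp.single_apply]
    have hiff : (g = ⟨h, ofAdd z⟩) ↔ (g.left = h) :=
      ⟨fun e => by rw [e], fun hl => by cases g; cases hl; cases hg; rfl⟩
    by_cases he : g.left = h
    · rw [if_pos (hiff.mpr he), if_pos he]
    · rw [if_neg (fun e => he (hiff.mp e)), if_neg he]
  · rw [if_neg hg, if_neg (show ¬ g = ⟨h, ofAdd z⟩ from fun e => hg (by rw [e]))]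
    rfl


noncomputable def sig (z : ℤ) : MonoidAlgebra Λ H →+* MonoidAlgebra Λ H :=
  MonoidAlgebra.mapDomainRingHom Λ (φ (ofAdd z))

theorem sig_single (z : ℤ) (h : H) (c : Λ) :
    sig φ z (MonoidAlgebra.single h c) = MonoidAlgebra.single (φ (ofAdd z) h) c := by
  simp [sig]

theorem sig_zero (r : MonoidAlgebra Λ H) : sig φ 0 r = r := by
  simp only [sig, ofAdd_zero, map_one, MonoidAlgebra.mapDomainRingHom_apply]
  have h1 : ⇑(1 : MulAut H) = id := rfl
  show MonoidAlgebra.ofCoeff (Finsupp.mapDomain id r.coeff) = r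
  rw [Finsupp.mapDomain_id]

theorem coeff_mul_single (z : ℤ) (x : MonoidAlgebra Λ (H ⋊[φ] Multiplicative ℤ))
    (g : H ⋊[φ] Multiplicative ℤ) (c : Λ) :
    coeff φ z (x * MonoidAlgebra.single g c) =
      coeff φ (z - toAdd g.right) x *
        MonoidAlgebra.single (φ (ofAdd (z - toAdd g.right)) g.left) c := by
  have hw : (ofAdd z) * g.right⁻¹ = ofAdd (z - toAdd g.right) := by
    rw [sub_eq_add_neg, ofAdd_add, ofAdd_neg, ofAdd_toAdd]
  ext h
  rw [coeff_apply, MonoidAlgebra.coeff_mul_single_apply, MonoidAlgebra.coeff_mul_single_apply, coeff_apply]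
  congr 2
  have hl : ((⟨h, ofAdd z⟩ : H ⋊[φ] Multiplicative ℤ) * g⁻¹).left
      = h * (φ (ofAdd (z - toAdd g.right)) g.left)⁻¹ := by
    rw [SemidirectProduct.mul_left, SemidirectProduct.inv_left]
    show h * (φ (ofAdd z)) ((φ g.right⁻¹) g.left⁻¹) = _
    rw [← MulAut.mul_apply, ← map_mul, hw, map_inv]
  have hr : ((⟨h, ofAdd z⟩ : H ⋊[φ] Multiplicative ℤ) * g⁻¹).right
      = ofAdd (z - toAdd g.right) := by
    rw [SemidirectProduct.mul_right, SemidirectProduct.inv_right]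
    exact hw
  cases hgg : ((⟨h, ofAdd z⟩ : H ⋊[φ] Multiplicative ℤ) * g⁻¹)
  · rw [hgg] at hl hr
    simp only at hl hr
    rw [hl, hr]

theorem coeff_mul_iota (z : ℤ) (x : MonoidAlgebra Λ (H ⋊[φ] Multiplicative ℤ))
    (r : MonoidAlgebra Λ H) :
    coeff φ z (x * MonoidAlgebra.mapDomainRingHom Λ
        (SemidirectProduct.inl : H →* H ⋊[φ] Multiplicative ℤ) r)
      = coeff φ z x * sig φ z r := by
  induction r using MonoidAlgebra.induction with
  | zero => simp
  | single_add g c rest hg hc ih =>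
      rw [map_add, mul_add, map_add, map_add, mul_add, ih]
      congr 1
      rw [show (MonoidAlgebra.mapDomainRingHom Λ
            (SemidirectProduct.inl : H →* H ⋊[φ] Multiplicative ℤ) (MonoidAlgebra.single g c))
          = MonoidAlgebra.single (SemidirectProduct.inl g) c from by
        simp [MonoidAlgebra.mapDomainRingHom_apply]]
      rw [coeff_mul_single]
      simp [sig_single]

theorem coeff_mul_inr (z : ℤ) (x : MonoidAlgebra Λ (H ⋊[φ] Multiplicative ℤ)) (w : ℤ) :
    coeff φ z (x * MonoidAlgebra.single
        (SemidirectProduct.inr (ofAdd w) : H ⋊[φ] Multiplicative ℤ) (1:Λ))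
      = coeff φ (z - w) x := by
  rw [coeff_mul_single]
  simp only [SemidirectProduct.right_inr, SemidirectProduct.left_inr, toAdd_ofAdd, map_one]
  rw [← MonoidAlgebra.one_def, mul_one]

theorem single_inr_pow (w : ℤ) (k : ℕ) :
    (MonoidAlgebra.single (SemidirectProduct.inr (ofAdd w) : H ⋊[φ] Multiplicative ℤ) (1:Λ))^k
      = MonoidAlgebra.single (SemidirectProduct.inr (ofAdd ((k:ℤ) * w))) 1 := by
  rw [MonoidAlgebra.single_pow, one_pow, ← map_pow]
  congr 1

theorem coeff_mul_upow (z : ℤ) (x : MonoidAlgebra Λ (H ⋊[φ] Multiplicative ℤ)) (k : ℕ) :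
    coeff φ z (x * (MonoidAlgebra.single
        (SemidirectProduct.inr (ofAdd 1) : H ⋊[φ] Multiplicative ℤ) (1:Λ))^k)
      = coeff φ (z - k) x := by
  rw [single_inr_pow, coeff_mul_inr, mul_one]

theorem coeff_one (z : ℤ) :
    coeff φ z (1 : MonoidAlgebra Λ (H ⋊[φ] Multiplicative ℤ)) = if z = 0 then 1 else 0 := by
  rw [MonoidAlgebra.one_def, coeff_single]
  by_cases hz : z = 0
  · subst hz
    rw [if_pos (show (1 : H ⋊[φ] Multiplicative ℤ).right = ofAdd (0:ℤ) by simp), if_pos rfl]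
    have h2 : (1 : H ⋊[φ] Multiplicative ℤ).left = 1 := rfl
    rw [h2, ← MonoidAlgebra.one_def]
  · rw [if_neg, if_neg hz]
    intro hcon
    apply hz
    have : toAdd ((1 : H ⋊[φ] Multiplicative ℤ).right) = toAdd (ofAdd z) := by rw [hcon]
    simpa using this.symm

theorem coeff_iota (z : ℤ) (r : MonoidAlgebra Λ H) :
    coeff φ z (MonoidAlgebra.mapDomainRingHom Λ
        (SemidirectProduct.inl : H →* H ⋊[φ] Multiplicative ℤ) r)
      = if z = 0 then r else 0 := by
  have h1 := coeff_mul_iota φ z 1 r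
  rw [one_mul] at h1
  rw [h1, coeff_one]
  by_cases hz : z = 0
  · subst hz; rw [if_pos rfl, if_pos rfl, one_mul, sig_zero]
  · rw [if_neg hz, if_neg hz, zero_mul]


noncomputable def degs (a : MonoidAlgebra Λ (H ⋊[φ] Multiplicative ℤ)) : Finset ℤ :=
  a.coeff.support.image (fun g => toAdd g.right)

theorem coeff_eq_zero_of_not_mem_degs (a : MonoidAlgebra Λ (H ⋊[φ] Multiplicative ℤ))
    (z : ℤ) (hz : z ∉ degs φ a) : coeff φ z a = 0 := by
  ext h
  rw [coeff_apply]
  by_contra hne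
  apply hz
  refine Finset.mem_image.mpr ⟨⟨h, ofAdd z⟩, Finsupp.mem_support_iff.mpr ?_, by simp⟩
  simpa using hne

theorem coeff_ne_zero_of_mem_degs (a : MonoidAlgebra Λ (H ⋊[φ] Multiplicative ℤ))
    (z : ℤ) (hz : z ∈ degs φ a) : coeff φ z a ≠ 0 := by
  obtain ⟨g, hg, hgz⟩ := Finset.mem_image.mp hz
  intro h0
  apply Finsupp.mem_support_iff.mp hg
  have he : (⟨g.left, ofAdd z⟩ : H ⋊[φ] Multiplicative ℤ) = g := by
    have h2 : ofAdd z = g.right := by rw [← hgz, ofAdd_toAdd]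
    cases g; cases h2; rfl
  calc a.coeff g = a.coeff ⟨g.left, ofAdd z⟩ := by rw [he]
  _ = (coeff φ z a).coeff g.left := rfl
  _ = 0 := by rw [h0]; rfl

def Ecoef (i j : ℕ) : ℤ := (-1)^(i-j) * (i.choose j)

theorem Ecoef_self (i : ℕ) : Ecoef i i = 1 := by simp [Ecoef]

theorem Ecoef_zero_of_lt {i j : ℕ} (h : i < j) : Ecoef i j = 0 := by
  simp [Ecoef, Nat.choose_eq_zero_of_lt h]

noncomputable def uel : MonoidAlgebra Λ (H ⋊[φ] Multiplicative ℤ) :=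
  MonoidAlgebra.single (SemidirectProduct.inr (ofAdd 1)) 1

noncomputable def vel : MonoidAlgebra Λ (H ⋊[φ] Multiplicative ℤ) :=
  MonoidAlgebra.single (SemidirectProduct.inr (ofAdd (-1))) 1

theorem texp (i : ℕ) :
    (uel φ - 1 : MonoidAlgebra Λ (H ⋊[φ] Multiplicative ℤ))^i
      = ∑ j ∈ range (i+1), Ecoef i j • (uel φ)^j := by
  have hc : Commute (uel φ : MonoidAlgebra Λ (H ⋊[φ] Multiplicative ℤ)) (-1) :=
    (Commute.one_right _).neg_right
  rw [sub_eq_add_neg, hc.add_pow]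
  apply Finset.sum_congr rfl
  intro j hj
  have c1 : Commute ((Ecoef i j : ℤ) : MonoidAlgebra Λ (H ⋊[φ] Multiplicative ℤ)) ((uel φ)^j) :=
    Int.cast_commute _ _
  rw [zsmul_eq_mul, c1.eq, mul_assoc]
  congr 1
  push_cast [Ecoef]
  ring_nf

theorem coeff_mul_tpow (z : ℤ) (x : MonoidAlgebra Λ (H ⋊[φ] Multiplicative ℤ)) (i : ℕ) :
    coeff φ z (x * (uel φ - 1)^i) = ∑ j ∈ range (i+1), Ecoef i j • coeff φ (z - j) x := by
  rw [texp, Finset.mul_sum, map_sum]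
  apply Finset.sum_congr rfl
  intro j hj
  rw [mul_smul_comm, map_zsmul]
  congr 1
  exact coeff_mul_upow φ z x j

theorem single_inr_mul_iota (w : ℤ) (r : MonoidAlgebra Λ H) :
    (MonoidAlgebra.single (SemidirectProduct.inr (ofAdd w) : H ⋊[φ] Multiplicative ℤ) (1:Λ))
        * MonoidAlgebra.mapDomainRingHom Λ
          (SemidirectProduct.inl : H →* H ⋊[φ] Multiplicative ℤ) r
      = MonoidAlgebra.mapDomainRingHom Λ
          (SemidirectProduct.inl : H →* H ⋊[φ] Multiplicative ℤ) (sig φ w r)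
        * MonoidAlgebra.single (SemidirectProduct.inr (ofAdd w)) 1 := by
  induction r using MonoidAlgebra.induction with
  | zero => simp
  | single_add h c rest hh hc ih =>
      rw [map_add, map_add, map_add, mul_add, add_mul, ih]
      congr 1
      have hsing : ∀ (h' : H) (c' : Λ), (MonoidAlgebra.mapDomainRingHom Λ
          (SemidirectProduct.inl : H →* H ⋊[φ] Multiplicative ℤ) (MonoidAlgebra.single h' c'))
          = MonoidAlgebra.single (SemidirectProduct.inl h') c' := by
        intro h' c'; simp [MonoidAlgebra.mapDomainRingHom_apply]
      rw [hsing, show sig φ w (MonoidAlgebra.single h c) = MonoidAlgebra.single (φ (ofAdd w) h) c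
          from sig_single φ w h c, hsing]
      rw [MonoidAlgebra.single_mul_single, MonoidAlgebra.single_mul_single, one_mul, mul_one]
      congr 1
      have := SemidirectProduct.inl_aut (φ := φ) (ofAdd w) h
      rw [this, mul_assoc, mul_assoc, ← map_mul]
      simp

theorem vel_mul_uel : (vel φ : MonoidAlgebra Λ (H ⋊[φ] Multiplicative ℤ)) * uel φ = 1 := by
  rw [vel, uel, MonoidAlgebra.single_mul_single, one_mul, ← map_mul]
  have : (ofAdd (-1 : ℤ)) * ofAdd (1 : ℤ) = 1 := by
    rw [← ofAdd_add]; norm_num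
  rw [this, map_one, ← MonoidAlgebra.one_def]

theorem uel_mul_vel : (uel φ : MonoidAlgebra Λ (H ⋊[φ] Multiplicative ℤ)) * vel φ = 1 := by
  rw [vel, uel, MonoidAlgebra.single_mul_single, one_mul, ← map_mul]
  have : (ofAdd (1 : ℤ)) * ofAdd (-1 : ℤ) = 1 := by
    rw [← ofAdd_add]; norm_num
  rw [this, map_one, ← MonoidAlgebra.one_def]


noncomputable abbrev iot : MonoidAlgebra Λ H →+* MonoidAlgebra Λ (H ⋊[φ] Multiplicative ℤ) :=
  MonoidAlgebra.mapDomainRingHom Λ (SemidirectProduct.inl : H →* H ⋊[φ] Multiplicative ℤ)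

theorem coeff_iota_tpow_ne (z : ℤ) (r : MonoidAlgebra Λ H) (i : ℕ)
    (hz : z < 0 ∨ (i:ℤ) < z) :
    coeff φ z (iot φ r * (uel φ - 1)^i) = 0 := by
  rw [coeff_mul_tpow]
  apply Finset.sum_eq_zero
  intro j hj
  have hjr := Finset.mem_range.mp hj
  rw [coeff_iota, if_neg (by rcases hz with h | h <;> omega), smul_zero]

theorem coeff_iota_tpow_self (r : MonoidAlgebra Λ H) (i : ℕ) :
    coeff φ (i : ℤ) (iot φ r * (uel φ - 1)^i) = r := by
  rw [coeff_mul_tpow, Finset.sum_eq_single i]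
  · rw [coeff_iota, if_pos (by omega), Ecoef_self, one_smul]
  · intro j hj hne
    have hjr := Finset.mem_range.mp hj
    rw [coeff_iota, if_neg (by omega), smul_zero]
  · intro hni; exact absurd (Finset.self_mem_range_succ i) hni

variable (n : ℕ) (lam : Fin n → MonoidAlgebra Λ H)

noncomputable def gcoef (j : ℕ) : MonoidAlgebra Λ H :=
  Ecoef n j • (1 : MonoidAlgebra Λ H) + ∑ i : Fin n, Ecoef (i:ℕ) j • lam i

theorem f_expand :
    (uel φ - 1 : MonoidAlgebra Λ (H ⋊[φ] Multiplicative ℤ))^n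
        + ∑ i : Fin n, iot φ (lam i) * (uel φ - 1)^(i:ℕ)
      = ∑ j ∈ range (n+1), iot φ (gcoef n lam j) * (uel φ)^j := by
  have hterm : ∀ (i : Fin n), iot φ (lam i) * (uel φ - 1)^(i:ℕ)
      = ∑ j ∈ range (n+1), Ecoef (i:ℕ) j • (iot φ (lam i) * (uel φ)^j) := by
    intro i
    rw [texp, Finset.mul_sum]
    rw [Finset.sum_congr rfl
      (fun j _ => mul_smul_comm (Ecoef (i:ℕ) j) (iot φ (lam i)) ((uel φ)^j))]
    apply Finset.sum_subset (Finset.range_subset_range.mpr (by omega))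
    intro j hj hj2
    have hlt : (i:ℕ) < j := by
      simp only [Finset.mem_range] at hj hj2; omega
    rw [Ecoef_zero_of_lt hlt, zero_smul]
  have hg : ∀ j, iot φ (gcoef n lam j) * (uel φ)^j
      = Ecoef n j • (uel φ)^j
        + ∑ i : Fin n, Ecoef (i:ℕ) j • (iot φ (lam i) * (uel φ)^j) := by
    intro j
    rw [gcoef, map_add, map_zsmul, map_one, map_sum]
    rw [add_mul, smul_mul_assoc, one_mul, Finset.sum_mul]
    congr 1
    apply Finset.sum_congr rfl
    intro i _
    rw [map_zsmul, smul_mul_assoc]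
  rw [Finset.sum_congr rfl (fun i _ => hterm i), Finset.sum_comm, texp,
    ← Finset.sum_add_distrib]
  exact (Finset.sum_congr rfl (fun j _ => (hg j).symm))

theorem coeff_mul_f_high (a : MonoidAlgebra Λ (H ⋊[φ] Multiplicative ℤ)) (K : ℤ)
    (hK : ∀ z, K < z → coeff φ z a = 0) :
    coeff φ (K + n) (a * ((uel φ - 1)^n + ∑ i : Fin n, iot φ (lam i) * (uel φ - 1)^(i:ℕ)))
      = coeff φ K a := by
  have expand : a * ((uel φ - 1)^n + ∑ i : Fin n, iot φ (lam i) * (uel φ - 1)^(i:ℕ))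
      = a * (uel φ - 1)^n + ∑ i : Fin n, (a * iot φ (lam i)) * (uel φ - 1)^(i:ℕ) := by
    rw [mul_add, Finset.mul_sum]
    congr 1
    exact Finset.sum_congr rfl (fun i _ => (mul_assoc _ _ _).symm)
  have h1 : coeff φ (K+n) (a * (uel φ - 1)^n) = coeff φ K a := by
    rw [coeff_mul_tpow, Finset.sum_eq_single n]
    · rw [Ecoef_self, one_smul, show K + (n:ℤ) - (n:ℤ) = K by ring]
    · intro j hj hne
      have hjr := Finset.mem_range.mp hj
      rw [hK (K+n-j) (by omega), smul_zero]
    · intro h; exact absurd (Finset.self_mem_range_succ n) h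
  have h2 : ∀ i : Fin n, coeff φ (K+n) ((a * iot φ (lam i)) * (uel φ - 1)^(i:ℕ)) = 0 := by
    intro i
    rw [coeff_mul_tpow]
    apply Finset.sum_eq_zero
    intro j hj
    have hjr := Finset.mem_range.mp hj
    have hi : (i:ℕ) < n := i.2
    rw [coeff_mul_iota, hK (K+n-j) (by omega), zero_mul, smul_zero]
  rw [expand, map_add, map_sum, h1, Finset.sum_eq_zero (fun i _ => h2 i), add_zero]

theorem coeff_mul_f_low (a : MonoidAlgebra Λ (H ⋊[φ] Multiplicative ℤ)) (m : ℤ)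
    (hm : ∀ z, z < m → coeff φ z a = 0) :
    coeff φ m (a * ((uel φ - 1)^n + ∑ i : Fin n, iot φ (lam i) * (uel φ - 1)^(i:ℕ)))
      = coeff φ m a * sig φ m (gcoef n lam 0) := by
  have expand : a * ((uel φ - 1)^n + ∑ i : Fin n, iot φ (lam i) * (uel φ - 1)^(i:ℕ))
      = a * (uel φ - 1)^n + ∑ i : Fin n, (a * iot φ (lam i)) * (uel φ - 1)^(i:ℕ) := by
    rw [mul_add, Finset.mul_sum]
    congr 1
    exact Finset.sum_congr rfl (fun i _ => (mul_assoc _ _ _).symm)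
  have h1 : coeff φ m (a * (uel φ - 1)^n) = Ecoef n 0 • coeff φ m a := by
    rw [coeff_mul_tpow, Finset.sum_eq_single 0]
    · norm_num
    · intro j hj hne
      rw [hm (m-j) (by omega), smul_zero]
    · intro h; exact absurd (Finset.mem_range.mpr (by omega)) h
  have h2 : ∀ i : Fin n, coeff φ m ((a * iot φ (lam i)) * (uel φ - 1)^(i:ℕ))
      = Ecoef (i:ℕ) 0 • (coeff φ m a * sig φ m (lam i)) := by
    intro i
    rw [coeff_mul_tpow, Finset.sum_eq_single 0]
    · rw [show m - ((0:ℕ):ℤ) = m by norm_num, coeff_mul_iota]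
    · intro j hj hne
      rw [coeff_mul_iota, hm (m-j) (by omega), zero_mul, smul_zero]
    · intro h; exact absurd (Finset.mem_range.mpr (by omega)) h
  rw [expand, map_add, map_sum, h1, Finset.sum_congr rfl (fun i _ => h2 i)]
  rw [gcoef, map_add, map_zsmul, map_one, map_sum, mul_add, mul_smul_comm, mul_one]
  congr 1
  rw [Finset.mul_sum]
  apply Finset.sum_congr rfl
  intro i _
  rw [map_zsmul, mul_smul_comm]

theorem gcoef_zero_isUnit
    (hlam : ∀ i, lam i ∈ (⊥ : Ideal (MonoidAlgebra Λ H)).jacobson) :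
    IsUnit (gcoef n lam 0) := by
  have hx : ((-1:ℤ)^n • ∑ i : Fin n, Ecoef (i:ℕ) 0 • lam i)
      ∈ (⊥ : Ideal (MonoidAlgebra Λ H)).jacobson :=
    zsmul_mem (sum_mem (fun i _ => zsmul_mem (hlam i) _)) _
  have hunit := isUnit_one_add_of_mem_jacobson_bot hx
  have hgq : gcoef n lam 0
      = ((-1:ℤ))^n • ((1 : MonoidAlgebra Λ H)
          + (-1:ℤ)^n • ∑ i : Fin n, Ecoef (i:ℕ) 0 • lam i) := by
    rw [smul_add, smul_smul]
    have hs : ((-1:ℤ)^n * (-1:ℤ)^n) = 1 := by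
      rw [← mul_pow]; norm_num
    rw [hs, one_smul, gcoef]
    congr 1
    simp [Ecoef]
  rw [hgq, zsmul_eq_mul]
  push_cast
  exact ((isUnit_one.neg).pow n).mul hunit


theorem indep_aux
    (hlam : ∀ i, lam i ∈ (⊥ : Ideal (MonoidAlgebra Λ H)).jacobson)
    (c : Fin n → MonoidAlgebra Λ H) (a : MonoidAlgebra Λ (H ⋊[φ] Multiplicative ℤ))
    (h : a * ((uel φ - 1)^n + ∑ i : Fin n, iot φ (lam i) * (uel φ - 1)^(i:ℕ))
        = ∑ i : Fin n, iot φ (c i) * (uel φ - 1)^(i:ℕ)) :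
    a = 0 := by
  by_contra ha
  have hs : a.coeff.support.Nonempty :=
    Finsupp.support_nonempty_iff.mpr (mt MonoidAlgebra.coeff_eq_zero.mp ha)
  have hd : (degs φ a).Nonempty := hs.image _
  set K := (degs φ a).max' hd with hKdef
  set m := (degs φ a).min' hd with hmdef
  have hmK : m ≤ K := Finset.min'_le _ K (Finset.max'_mem _ hd)
  have hKz : ∀ z, K < z → coeff φ z a = 0 := fun z hz =>
    coeff_eq_zero_of_not_mem_degs φ a z
      (fun hmem => absurd (Finset.le_max' _ _ hmem) (not_le.mpr hz))
  have hmz : ∀ z, z < m → coeff φ z a = 0 := fun z hz =>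
    coeff_eq_zero_of_not_mem_degs φ a z
      (fun hmem => absurd (Finset.min'_le _ _ hmem) (not_le.mpr hz))
  have hzero : ∀ z : ℤ, (z < 0 ∨ (n:ℤ) ≤ z)
      → coeff φ z (∑ i : Fin n, iot φ (c i) * (uel φ - 1)^(i:ℕ)) = 0 := by
    intro z hz
    rw [map_sum]
    apply Finset.sum_eq_zero
    intro i _
    apply coeff_iota_tpow_ne
    rcases hz with h' | h'
    · exact Or.inl h'
    · right
      have : (i:ℕ) < n := i.2
      omega
  have h2 : coeff φ K a ≠ 0 := coeff_ne_zero_of_mem_degs φ a K (Finset.max'_mem _ _)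
  have hKneg : K < 0 := by
    by_contra hKn
    apply h2
    rw [← coeff_mul_f_high φ n lam a K hKz, h]
    exact hzero _ (Or.inr (by omega))
  have h3 : coeff φ m a ≠ 0 := coeff_ne_zero_of_mem_degs φ a m (Finset.min'_mem _ _)
  have h4 : coeff φ m a * sig φ m (gcoef n lam 0) ≠ 0 := by
    have hu : IsUnit (sig φ m (gcoef n lam 0)) :=
      (gcoef_zero_isUnit n lam hlam).map (sig φ m)
    obtain ⟨u, hu'⟩ := hu
    rw [← hu']
    intro h0
    apply h3
    have := congrArg (fun y => y * ((u⁻¹ : _ˣ) : MonoidAlgebra Λ H)) h0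
    simpa [mul_assoc] using this
  have hmpos : 0 ≤ m := by
    by_contra hmn
    apply h4
    rw [← coeff_mul_f_low φ n lam a m hmz, h]
    exact hzero _ (Or.inl (by omega))
  omega

theorem coeffs_zero (c : Fin n → MonoidAlgebra Λ H)
    (h : ∑ i : Fin n, iot φ (c i) * (uel φ - 1)^(i:ℕ) = 0) : ∀ i, c i = 0 := by
  by_contra hc
  push_neg at hc
  obtain ⟨i1, hi1⟩ := hc
  classical
  set S := Finset.univ.filter (fun i : Fin n => c i ≠ 0) with hS
  have hSne : S.Nonempty := ⟨i1, by simp [hS, hi1]⟩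
  set i0 := S.max' hSne with hi0
  have hmem : i0 ∈ S := Finset.max'_mem _ _
  have hne : c i0 ≠ 0 := by
    have := Finset.mem_filter.mp hmem
    exact this.2
  have key : coeff φ ((i0 : ℕ) : ℤ) (∑ i : Fin n, iot φ (c i) * (uel φ - 1)^(i:ℕ)) = c i0 := by
    rw [map_sum, Finset.sum_eq_single i0]
    · exact coeff_iota_tpow_self φ (c i0) (i0 : ℕ)
    · intro b _ hb
      rcases lt_or_gt_of_ne hb with hlt | hgt
      · -- b < i0 : degree too low
        apply coeff_iota_tpow_ne
        right
        exact_mod_cast (show ((b:ℕ):ℤ) < ((i0:ℕ):ℤ) by exact_mod_cast hlt)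
      · -- b > i0 : coefficient vanishes
        have hb0 : c b = 0 := by
          by_contra hbne
          have : b ∈ S := by simp [hS, hbne]
          exact absurd (Finset.le_max' _ _ this) (not_le.mpr hgt)
        rw [hb0, map_zero, zero_mul, map_zero]
    · intro habs; exact absurd (Finset.mem_univ i0) habs
  rw [h, map_zero] at key
  exact hne key.symm


theorem uel_mul_iota (r : MonoidAlgebra Λ H) :
    (uel φ) * iot φ r = iot φ (sig φ 1 r) * uel φ := single_inr_mul_iota φ 1 r

theorem vel_mul_iota (r : MonoidAlgebra Λ H) :
    (vel φ) * iot φ r = iot φ (sig φ (-1) r) * vel φ := single_inr_mul_iota φ (-1) r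

theorem tel_mul_iota (r : MonoidAlgebra Λ H) :
    (uel φ - 1) * iot φ r
      = iot φ (sig φ 1 r) * (uel φ - 1) + iot φ (sig φ 1 r - r) := by
  rw [sub_mul, one_mul, uel_mul_iota, map_sub, mul_sub, mul_one]
  noncomm_ring

theorem uel_pow (k : ℕ) :
    ((uel φ : MonoidAlgebra Λ (H ⋊[φ] Multiplicative ℤ)))^k
      = MonoidAlgebra.single (SemidirectProduct.inr (ofAdd ((k:ℤ)))) 1 := by
  have h := single_inr_pow (Λ := Λ) φ 1 k
  rw [mul_one] at h
  exact h

theorem vel_pow (k : ℕ) :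
    ((vel φ : MonoidAlgebra Λ (H ⋊[φ] Multiplicative ℤ)))^k
      = MonoidAlgebra.single (SemidirectProduct.inr (ofAdd (-(k:ℤ)))) 1 := by
  have h := single_inr_pow (Λ := Λ) φ (-1) k
  rw [show ((k:ℤ)) * (-1:ℤ) = -(k:ℤ) by ring] at h
  exact h

end Coeff

end QFOSAux






set_option maxHeartbeats 2000000 in
open QFOSAux Multiplicative Finset in
/-- Let `Λ` be a ring, `G = H ⋊ Γ` with `Γ` infinite cyclic generated by `γ`, and
`f = tⁿ + ∑_{i<n} λᵢ tⁱ ∈ Λ[G]` a monic polynomial in `t = γ - 1` of degree `n` with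
coefficients `λᵢ` in the Jacobson radical of `Λ[H]`.  Then `M = Λ[G]/Λ[G]f` is finitely
generated and free as a `Λ[H]`-module, with basis the residue classes of `1, t, …, t^{n-1}`. -/
theorem quotient_free_over_subalgebra (Λ : Type*) [Ring Λ] (H : Type*) [Group H]
    (φ : Multiplicative ℤ →* MulAut H) (n : ℕ) (hn : 0 < n)
    (lam : Fin n → MonoidAlgebra Λ H)
    (hlam : ∀ i, lam i ∈ (⊥ : Ideal (MonoidAlgebra Λ H)).jacobson) :
    let G := H ⋊[φ] Multiplicative ℤ
    let ι : MonoidAlgebra Λ H →+* MonoidAlgebra Λ G :=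
      MonoidAlgebra.mapDomainRingHom Λ (SemidirectProduct.inl : H →* G)
    let t : MonoidAlgebra Λ G :=
      MonoidAlgebra.single (SemidirectProduct.inr (Multiplicative.ofAdd 1) : G) (1 : Λ) - 1
    let f : MonoidAlgebra Λ G := t ^ n + ∑ i : Fin n, ι (lam i) * t ^ (i : ℕ)
    letI : Module (MonoidAlgebra Λ H)
        (MonoidAlgebra Λ G ⧸ (Ideal.span {f} : Ideal (MonoidAlgebra Λ G))) :=
      Module.compHom _ ι
    ∃ b : Module.Basis (Fin n) (MonoidAlgebra Λ H)
        (MonoidAlgebra Λ G ⧸ (Ideal.span {f} : Ideal (MonoidAlgebra Λ G))),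
      ∀ i : Fin n, b i = Submodule.Quotient.mk (t ^ (i : ℕ)) := by
  intro G ι t f
  letI inst : Module (MonoidAlgebra Λ H) (MonoidAlgebra Λ G ⧸ (Ideal.span {f} : Ideal (MonoidAlgebra Λ G))) := Module.compHom _ ι
  have hft : t = uel φ - 1 := rfl
  have hfd : f = t ^ n + ∑ i : Fin n, ι (lam i) * t ^ (i : ℕ) := rfl
  let π : MonoidAlgebra Λ G →ₗ[MonoidAlgebra Λ G] (MonoidAlgebra Λ G ⧸ (Ideal.span {f} : Ideal (MonoidAlgebra Λ G))) :=
    (Ideal.span {f} : Ideal (MonoidAlgebra Λ G)).mkQ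
  have hπ : ∀ x : MonoidAlgebra Λ G, π x = Submodule.Quotient.mk x := fun x => rfl
  have hsm : ∀ (r : MonoidAlgebra Λ H) (x : MonoidAlgebra Λ G), r • (Submodule.Quotient.mk x : (MonoidAlgebra Λ G ⧸ (Ideal.span {f} : Ideal (MonoidAlgebra Λ G))))
      = Submodule.Quotient.mk (ι r * x) := by
    intro r x
    show ι r • (Submodule.Quotient.mk x : (MonoidAlgebra Λ G ⧸ (Ideal.span {f} : Ideal (MonoidAlgebra Λ G)))) = Submodule.Quotient.mk (ι r * x)
    rw [← Submodule.Quotient.mk_smul, smul_eq_mul]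
  have hAsm : ∀ (a x : MonoidAlgebra Λ G),
      a • (Submodule.Quotient.mk x : (MonoidAlgebra Λ G ⧸ (Ideal.span {f} : Ideal (MonoidAlgebra Λ G)))) = Submodule.Quotient.mk (a * x) := by
    intro a x
    rw [← Submodule.Quotient.mk_smul, smul_eq_mul]
  let v : Fin n → (MonoidAlgebra Λ G ⧸ (Ideal.span {f} : Ideal (MonoidAlgebra Λ G))) := fun i => Submodule.Quotient.mk (t ^ (i : ℕ))
  have hvdef : ∀ i : Fin n, v i = Submodule.Quotient.mk (t ^ (i : ℕ)) := fun i => rfl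
  have hvW : ∀ i : Fin n, v i ∈ Submodule.span (MonoidAlgebra Λ H) (Set.range v) :=
    fun i => Submodule.subset_span ⟨i, rfl⟩
  have hmkf : (Submodule.Quotient.mk f : (MonoidAlgebra Λ G ⧸ (Ideal.span {f} : Ideal (MonoidAlgebra Λ G)))) = 0 :=
    (Submodule.Quotient.mk_eq_zero _).mpr (Ideal.subset_span (Set.mem_singleton f))
  have hmulf : ∀ x : MonoidAlgebra Λ G, (Submodule.Quotient.mk (x * f) : (MonoidAlgebra Λ G ⧸ (Ideal.span {f} : Ideal (MonoidAlgebra Λ G)))) = 0 := fun x =>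
    (Submodule.Quotient.mk_eq_zero _).mpr (Ideal.mem_span_singleton'.mpr ⟨x, rfl⟩)
  have htn : (Submodule.Quotient.mk (t ^ n) : (MonoidAlgebra Λ G ⧸ (Ideal.span {f} : Ideal (MonoidAlgebra Λ G)))) ∈ Submodule.span (MonoidAlgebra Λ H) (Set.range v) := by
    have hde : t ^ n = f - ∑ i : Fin n, ι (lam i) * t ^ (i : ℕ) := by
      rw [hfd]; exact (add_sub_cancel_right _ _).symm
    have heq : (Submodule.Quotient.mk (t ^ n) : (MonoidAlgebra Λ G ⧸ (Ideal.span {f} : Ideal (MonoidAlgebra Λ G))))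
        = - ∑ i : Fin n, (lam i) • v i := by
      rw [← hπ, hde, map_sub, map_sum, hπ, hmkf, zero_sub]
      congr 1
    rw [heq]
    exact neg_mem (sum_mem (fun i _ => Submodule.smul_mem _ _ (hvW i)))
  have htpow : ∀ i : ℕ, i ≤ n →
      (Submodule.Quotient.mk (t ^ i) : (MonoidAlgebra Λ G ⧸ (Ideal.span {f} : Ideal (MonoidAlgebra Λ G)))) ∈ Submodule.span (MonoidAlgebra Λ H) (Set.range v) := by
    intro i hi
    rcases lt_or_eq_of_le hi with hlt | heq
    · exact hvW ⟨i, hlt⟩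
    · rw [heq]; exact htn
  have hcomm : ∀ r : MonoidAlgebra Λ H, t * ι r = ι (sig φ 1 r) * t + ι (sig φ 1 r - r) := by
    intro r
    rw [hft]
    exact tel_mul_iota φ r
  have hcomm' : ∀ r : MonoidAlgebra Λ H, vel φ * ι r = ι (sig φ (-1) r) * vel φ := fun r =>
    vel_mul_iota φ r
  have htW : ∀ w ∈ Submodule.span (MonoidAlgebra Λ H) (Set.range v),
      t • w ∈ Submodule.span (MonoidAlgebra Λ H) (Set.range v) := by
    intro w hw
    induction hw using Submodule.span_induction with
    | mem x hx =>
        obtain ⟨i, rfl⟩ := hx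
        have hstep : t • v i = Submodule.Quotient.mk (t ^ ((i : ℕ) + 1)) := by
          rw [hvdef, hAsm, ← pow_succ']
        rw [hstep]
        exact htpow _ i.2
    | zero => rw [smul_zero]; exact zero_mem _
    | add x y hx hy ihx ihy => rw [smul_add]; exact add_mem ihx ihy
    | smul r x hx ih =>
        have hsplit : t • (r • x) = (sig φ 1 r) • (t • x) + ((sig φ 1 r - r) : MonoidAlgebra Λ H) • x := by
          show t • (ι r • x) = ι (sig φ 1 r) • (t • x) + ι (sig φ 1 r - r) • x
          rw [← mul_smul, ← mul_smul, hcomm r, add_smul, mul_smul]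
        rw [hsplit]
        exact add_mem (Submodule.smul_mem _ _ ih) (Submodule.smul_mem _ _ hx)
  have huel_eq : (uel φ : MonoidAlgebra Λ G) = t + 1 := by rw [hft, sub_add_cancel]
  have huW : ∀ w ∈ Submodule.span (MonoidAlgebra Λ H) (Set.range v),
      (uel φ : MonoidAlgebra Λ G) • w ∈ Submodule.span (MonoidAlgebra Λ H) (Set.range v) := by
    intro w hw
    rw [huel_eq, add_smul, one_smul]
    exact add_mem (htW w hw) hw
  have hone : (Submodule.Quotient.mk (1 : MonoidAlgebra Λ G) : (MonoidAlgebra Λ G ⧸ (Ideal.span {f} : Ideal (MonoidAlgebra Λ G))))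
      ∈ Submodule.span (MonoidAlgebra Λ H) (Set.range v) := by
    have h0 : (Submodule.Quotient.mk (1 : MonoidAlgebra Λ G) : (MonoidAlgebra Λ G ⧸ (Ideal.span {f} : Ideal (MonoidAlgebra Λ G)))) = v ⟨0, hn⟩ := by
      rw [hvdef]; norm_num
    rw [h0]; exact hvW _
  have hupow : ∀ k : ℕ, (Submodule.Quotient.mk ((uel φ)^k : MonoidAlgebra Λ G) : (MonoidAlgebra Λ G ⧸ (Ideal.span {f} : Ideal (MonoidAlgebra Λ G))))
      ∈ Submodule.span (MonoidAlgebra Λ H) (Set.range v) := by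
    intro k
    induction k with
    | zero => rw [pow_zero]; exact hone
    | succ k ih =>
        rw [pow_succ', ← hAsm]
        exact huW _ ih
  obtain ⟨w0, hw0⟩ := gcoef_zero_isUnit n lam hlam
  have hfe : f = ∑ j ∈ range (n+1), ι (gcoef n lam j) * (uel φ)^j := by
    rw [hfd, hft]
    exact f_expand φ n lam
  have hvel : (Submodule.Quotient.mk (vel φ) : (MonoidAlgebra Λ G ⧸ (Ideal.span {f} : Ideal (MonoidAlgebra Λ G)))) ∈ Submodule.span (MonoidAlgebra Λ H) (Set.range v) := by
    have hinv : ((↑(w0⁻¹) : MonoidAlgebra Λ H)) * gcoef n lam 0 = 1 := by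
      rw [← hw0]; exact Units.inv_mul w0
    have hkey : (vel φ : MonoidAlgebra Λ G) = (vel φ * ι (↑(w0⁻¹) : MonoidAlgebra Λ H)) * f
        - ∑ j ∈ range n, ι (sig φ (-1) ((↑(w0⁻¹) : MonoidAlgebra Λ H) * gcoef n lam (j+1))) * (uel φ)^j := by
      rw [hfe, Finset.mul_sum]
      have hterm : ∀ j ∈ range (n+1),
          (vel φ * ι (↑(w0⁻¹) : MonoidAlgebra Λ H)) * (ι (gcoef n lam j) * (uel φ)^j)
          = ι (sig φ (-1) ((↑(w0⁻¹) : MonoidAlgebra Λ H) * gcoef n lam j)) * (vel φ * (uel φ)^j) := by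
        intro j _
        rw [mul_assoc (vel φ), ← mul_assoc (ι (↑(w0⁻¹) : MonoidAlgebra Λ H)), ← map_mul, ← mul_assoc, hcomm',
          mul_assoc]
      rw [Finset.sum_congr rfl hterm, Finset.sum_range_succ']
      have hlast : ι (sig φ (-1) ((↑(w0⁻¹) : MonoidAlgebra Λ H) * gcoef n lam 0)) * (vel φ * (uel φ)^0)
          = vel φ := by
        rw [hinv, map_one, map_one, one_mul, pow_zero, mul_one]
      rw [hlast]
      have hj : ∀ j ∈ range n, ι (sig φ (-1) ((↑(w0⁻¹) : MonoidAlgebra Λ H) * gcoef n lam (j+1)))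
            * (vel φ * (uel φ)^(j+1))
          = ι (sig φ (-1) ((↑(w0⁻¹) : MonoidAlgebra Λ H) * gcoef n lam (j+1))) * (uel φ)^j := by
        intro j _
        congr 1
        rw [pow_succ', ← mul_assoc, vel_mul_uel, one_mul]
      rw [Finset.sum_congr rfl hj]
      abel
    rw [← hπ, hkey, map_sub, map_sum, hπ, hmulf, zero_sub]
    apply neg_mem
    apply sum_mem
    intro j _
    rw [hπ, ← hsm]
    exact Submodule.smul_mem _ _ (hupow j)
  have hvt : ∀ i : ℕ, i < n →
      (vel φ : MonoidAlgebra Λ G) • (Submodule.Quotient.mk (t ^ i) : (MonoidAlgebra Λ G ⧸ (Ideal.span {f} : Ideal (MonoidAlgebra Λ G))))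
        ∈ Submodule.span (MonoidAlgebra Λ H) (Set.range v) := by
    intro i
    induction i with
    | zero =>
        intro _
        rw [pow_zero, hAsm, mul_one]
        exact hvel
    | succ i ih =>
        intro hi
        have hsp : vel φ * t ^ (i+1) = t ^ i - vel φ * t ^ i := by
          have h1 : vel φ * t = 1 - vel φ := by
            rw [hft, mul_sub, mul_one, vel_mul_uel]
          rw [pow_succ', ← mul_assoc, h1, sub_mul, one_mul]
        rw [hAsm, hsp]
        have hsub : (Submodule.Quotient.mk (t ^ i - vel φ * t ^ i) : (MonoidAlgebra Λ G ⧸ (Ideal.span {f} : Ideal (MonoidAlgebra Λ G))))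
            = Submodule.Quotient.mk (t ^ i)
              - (vel φ : MonoidAlgebra Λ G) • (Submodule.Quotient.mk (t ^ i) : (MonoidAlgebra Λ G ⧸ (Ideal.span {f} : Ideal (MonoidAlgebra Λ G)))) := by
          rw [hAsm, ← hπ, ← hπ, ← hπ, ← map_sub]
        rw [hsub]
        exact sub_mem (htpow i (by omega)) (ih (by omega))
  have hvW' : ∀ w ∈ Submodule.span (MonoidAlgebra Λ H) (Set.range v),
      (vel φ : MonoidAlgebra Λ G) • w ∈ Submodule.span (MonoidAlgebra Λ H) (Set.range v) := by
    intro w hw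
    induction hw using Submodule.span_induction with
    | mem x hx =>
        obtain ⟨i, rfl⟩ := hx
        exact hvt i i.2
    | zero => rw [smul_zero]; exact zero_mem _
    | add x y hx hy ihx ihy => rw [smul_add]; exact add_mem ihx ihy
    | smul r x hx ih =>
        have hsplit : (vel φ : MonoidAlgebra Λ G) • (r • x)
            = (sig φ (-1) r) • ((vel φ : MonoidAlgebra Λ G) • x) := by
          show (vel φ : MonoidAlgebra Λ G) • (ι r • x)
              = ι (sig φ (-1) r) • ((vel φ : MonoidAlgebra Λ G) • x)
          rw [← mul_smul, hcomm' r, mul_smul]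
        rw [hsplit]
        exact Submodule.smul_mem _ _ ih
  have hvpow : ∀ k : ℕ, (Submodule.Quotient.mk ((vel φ)^k : MonoidAlgebra Λ G) : (MonoidAlgebra Λ G ⧸ (Ideal.span {f} : Ideal (MonoidAlgebra Λ G))))
      ∈ Submodule.span (MonoidAlgebra Λ H) (Set.range v) := by
    intro k
    induction k with
    | zero => rw [pow_zero]; exact hone
    | succ k ih =>
        rw [pow_succ', ← hAsm]
        exact hvW' _ ih
  have hsingle : ∀ (g : G) (cl : Λ),
      (Submodule.Quotient.mk (MonoidAlgebra.single g cl) : (MonoidAlgebra Λ G ⧸ (Ideal.span {f} : Ideal (MonoidAlgebra Λ G))))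
        ∈ Submodule.span (MonoidAlgebra Λ H) (Set.range v) := by
    intro g cl
    have hdec : MonoidAlgebra.single g cl
        = ι (MonoidAlgebra.single g.left cl)
          * MonoidAlgebra.single (SemidirectProduct.inr g.right : G) (1:Λ) := by
      have h1 : ι (MonoidAlgebra.single g.left cl)
          = MonoidAlgebra.single (SemidirectProduct.inl g.left : G) cl := by
        show MonoidAlgebra.mapDomainRingHom Λ (SemidirectProduct.inl : H →* G)
            (MonoidAlgebra.single g.left cl) = _
        simp [MonoidAlgebra.mapDomainRingHom_apply]
      rw [h1, MonoidAlgebra.single_mul_single, mul_one, SemidirectProduct.inl_left_mul_inr_right]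
    have hz : (Submodule.Quotient.mk
        (MonoidAlgebra.single (SemidirectProduct.inr g.right : G) (1:Λ)) : (MonoidAlgebra Λ G ⧸ (Ideal.span {f} : Ideal (MonoidAlgebra Λ G))))
          ∈ Submodule.span (MonoidAlgebra Λ H) (Set.range v) := by
      obtain ⟨k, hk | hk⟩ := Int.eq_nat_or_neg (toAdd g.right)
      · have he : MonoidAlgebra.single (SemidirectProduct.inr g.right : G) (1:Λ)
            = (uel φ)^k := by
          rw [uel_pow, show ofAdd ((k:ℤ)) = g.right by rw [← hk, ofAdd_toAdd]]
        rw [he]; exact hupow k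
      · have he : MonoidAlgebra.single (SemidirectProduct.inr g.right : G) (1:Λ)
            = (vel φ)^k := by
          rw [vel_pow, show -((k:ℤ)) = toAdd g.right by omega, ofAdd_toAdd]
        rw [he]; exact hvpow k
    rw [hdec, ← hsm]
    exact Submodule.smul_mem _ _ hz
  have hsurj : ∀ a : MonoidAlgebra Λ G,
      (Submodule.Quotient.mk a : (MonoidAlgebra Λ G ⧸ (Ideal.span {f} : Ideal (MonoidAlgebra Λ G)))) ∈ Submodule.span (MonoidAlgebra Λ H) (Set.range v) := by
    intro a
    induction a using MonoidAlgebra.induction with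
    | zero =>
        rw [show (Submodule.Quotient.mk (0 : MonoidAlgebra Λ G) : (MonoidAlgebra Λ G ⧸ (Ideal.span {f} : Ideal (MonoidAlgebra Λ G)))) = 0 from rfl]
        exact zero_mem _
    | single_add g b rest hg hb ih =>
        have key := add_mem (hsingle g b) ih
        convert key using 2
        rw [Submodule.Quotient.mk_add]
  have hspan : ⊤ ≤ Submodule.span (MonoidAlgebra Λ H) (Set.range v) := by
    intro x _
    obtain ⟨a, rfl⟩ := Submodule.Quotient.mk_surjective _ x
    exact hsurj a
  have hli : LinearIndependent (MonoidAlgebra Λ H) v := by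
    rw [Fintype.linearIndependent_iff]
    intro cfun hsum
    have hsum' : (Submodule.Quotient.mk (∑ i : Fin n, ι (cfun i) * t ^ (i:ℕ)) : (MonoidAlgebra Λ G ⧸ (Ideal.span {f} : Ideal (MonoidAlgebra Λ G)))) = 0 := by
      rw [← hπ, map_sum]
      rw [Finset.sum_congr rfl (fun i (_ : i ∈ Finset.univ) => by rw [hπ, ← hsm])]
      exact hsum
    have hmem : (∑ i : Fin n, ι (cfun i) * t ^ (i:ℕ)) ∈ (Ideal.span {f} : Ideal (MonoidAlgebra Λ G)) :=
      (Submodule.Quotient.mk_eq_zero _).mp hsum'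
    obtain ⟨a, ha⟩ := Ideal.mem_span_singleton'.mp hmem
    have ha0 : a = 0 := indep_aux φ n lam hlam cfun a ha
    rw [ha0, zero_mul] at ha
    exact coeffs_zero φ n cfun ha.symm
  exact ⟨Module.Basis.mk hli hspan, fun i => Module.Basis.mk_apply hli hspan i⟩
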